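/- Let H be the 4×4 Hermitian matrix (rows/columns indexed by (x₁y₁, x₁y₂, x₂y₁, x₂y₂)) H = [[0,0,0,1],[0,−2,1,0],[0,1,−2,0],[1,0,0,0]], and let ρ_e = (1/2)·w w† where w = e₁⊗e₁ + e₂⊗e₂ ∈ ℂ²⊗ℂ² (i.e. ρ_e is the 4×4 matrix with entries 1/2 in positions (1,1),(1,4),(4,1),(4,4) and 0 elsewhere). Then: (i) Re((x⊗y)†H(x⊗y)) ≤ 0 for all x, y ∈ ℂ²; (ii) H is not negative semidefinite (there exists v ∈ ℂ⁴ with Re(v†Hv) > 0); (iii) Re Tr(Hρ_e) = 1; and consequently (iv) ρ_e is not separable, i.e. ρ_e does not lie in the convex hull of {(x⊗y)(x⊗y)† : x, y unit vectors in ℂ²}. -/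
import Mathlib


open Matrix ComplexOrder

/-- The tensor product of two vectors: `(x ⊗ y)(i,j) = xᵢ · yⱼ`. -/
def tens (x : Fin 2 → ℂ) (y : Fin 2 → ℂ) : Fin 2 × Fin 2 → ℂ :=
  fun p => x p.1 * y p.2

/-- The rank-one matrix `v v†`. -/
def outer {ι : Type*} (v : ι → ℂ) : Matrix ι ι ℂ :=
  Matrix.of fun s t => v s * (starRingEnd ℂ) (v t)

/-- A unit vector: `∑ |xᵢ|² = 1`. -/
def IsUnitVec (x : Fin 2 → ℂ) : Prop :=
  ∑ i, Complex.normSq (x i) = 1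

/-- The Hermitian matrix `H = [[0,0,0,1],[0,−2,1,0],[0,1,−2,0],[1,0,0,0]]`,
with rows/columns indexed by `(Fin 2 × Fin 2)` in the order `(0,0),(0,1),(1,0),(1,1)`. -/
def Hmat : Matrix (Fin 2 × Fin 2) (Fin 2 × Fin 2) ℂ :=
  Matrix.of fun s t =>
    if (s = ((0 : Fin 2), (0 : Fin 2)) ∧ t = ((1 : Fin 2), (1 : Fin 2))) ∨
       (s = ((1 : Fin 2), (1 : Fin 2)) ∧ t = ((0 : Fin 2), (0 : Fin 2))) ∨
       (s = ((0 : Fin 2), (1 : Fin 2)) ∧ t = ((1 : Fin 2), (0 : Fin 2))) ∨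
       (s = ((1 : Fin 2), (0 : Fin 2)) ∧ t = ((0 : Fin 2), (1 : Fin 2))) then 1
    else if (s = ((0 : Fin 2), (1 : Fin 2)) ∧ t = ((0 : Fin 2), (1 : Fin 2))) ∨
            (s = ((1 : Fin 2), (0 : Fin 2)) ∧ t = ((1 : Fin 2), (0 : Fin 2))) then -2
    else 0

/-- The vector `w = e₁⊗e₁ + e₂⊗e₂`. -/
def wvec : Fin 2 × Fin 2 → ℂ := fun p => if p.1 = p.2 then 1 else 0

/-- The entangled Bell density matrix `ρ_e = (1/2)·w w†`. -/
noncomputable def rhoE : Matrix (Fin 2 × Fin 2) (Fin 2 × Fin 2) ℂ := ((1 : ℂ)/2) • outer wvec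

lemma trace_mul_outer {ι : Type*} [Fintype ι] (H : Matrix ι ι ℂ) (v : ι → ℂ) :
    (H * outer v).trace = star v ⬝ᵥ H.mulVec v := by
  simp only [Matrix.trace, Matrix.mul_apply, outer, Matrix.of_apply, Matrix.diag_apply,
    dotProduct, mulVec, Pi.star_apply, RCLike.star_def, Finset.mul_sum]
  congr 1; ext s; congr 1; ext t; ring

lemma part_i (x y : Fin 2 → ℂ) : (star (tens x y) ⬝ᵥ Hmat.mulVec (tens x y)).re ≤ 0 := by
  simp only [dotProduct, mulVec, Fintype.sum_prod_type, Fin.sum_univ_two, tens, Hmat,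
    Matrix.of_apply, Pi.star_apply, RCLike.star_def, Prod.mk.injEq]
  norm_num
  nlinarith [sq_nonneg ((x 0).re*(y 1).re - (x 1).re*(y 0).re),
    sq_nonneg ((x 0).re*(y 1).im - (x 1).re*(y 0).im),
    sq_nonneg ((x 0).im*(y 1).re - (x 1).im*(y 0).re),
    sq_nonneg ((x 0).im*(y 1).im - (x 1).im*(y 0).im)]

lemma part_iii : ((Hmat * rhoE).trace).re = 1 := by
  simp only [Matrix.trace, Matrix.mul_apply, rhoE, outer, wvec, Hmat, Matrix.of_apply,
    Matrix.diag_apply, Matrix.smul_apply, Fintype.sum_prod_type, Fin.sum_univ_two,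
    Prod.mk.injEq]
  norm_num

theorem statement9 :
    (∀ x y : Fin 2 → ℂ, (star (tens x y) ⬝ᵥ Hmat.mulVec (tens x y)).re ≤ 0) ∧
    (∃ v : Fin 2 × Fin 2 → ℂ, 0 < (star v ⬝ᵥ Hmat.mulVec v).re) ∧
    ((Hmat * rhoE).trace).re = 1 ∧
    rhoE ∉ convexHull ℝ
      {M : Matrix (Fin 2 × Fin 2) (Fin 2 × Fin 2) ℂ |
        ∃ x y : Fin 2 → ℂ, IsUnitVec x ∧ IsUnitVec y ∧ M = outer (tens x y)} := by
  refine ⟨part_i, ⟨wvec, ?_⟩, part_iii, ?_⟩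
  · simp only [dotProduct, mulVec, Fintype.sum_prod_type, Fin.sum_univ_two, wvec, Hmat,
      Matrix.of_apply, Pi.star_apply, RCLike.star_def, Prod.mk.injEq]
    norm_num
  · intro hmem
    set S : Set (Matrix (Fin 2 × Fin 2) (Fin 2 × Fin 2) ℂ) :=
      {M | ∃ x y : Fin 2 → ℂ, IsUnitVec x ∧ IsUnitVec y ∧ M = outer (tens x y)}
    have hconv : Convex ℝ {M : Matrix (Fin 2 × Fin 2) (Fin 2 × Fin 2) ℂ |
        ((Hmat * M).trace).re ≤ 0} := by
      intro M hM N hN a b ha hb hab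
      simp only [Set.mem_setOf_eq] at *
      have h1 : (Hmat * (a • M + b • N)).trace
          = a • (Hmat * M).trace + b • (Hmat * N).trace := by
        rw [Matrix.mul_add, Matrix.mul_smul, Matrix.mul_smul, Matrix.trace_add,
          Matrix.trace_smul, Matrix.trace_smul]
      rw [h1]
      simp only [Complex.add_re, Complex.real_smul, Complex.mul_re, Complex.ofReal_re,
        Complex.ofReal_im, zero_mul, sub_zero]
      nlinarith
    have hsub : S ⊆ {M | ((Hmat * M).trace).re ≤ 0} := by
      rintro M ⟨x, y, -, -, rfl⟩
      simp only [Set.mem_setOf_eq]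
      rw [trace_mul_outer]
      exact part_i x y
    have := convexHull_min hsub hconv hmem
    simp only [Set.mem_setOf_eq] at this
    rw [part_iii] at this
    linarith
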